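/- arXiv:2107.12596 — 2 statements merged into one kernel-verified Lean document; each statement's English description precedes it below -/
import Mathlib

section
/- Under the communication setup, the backward controller recursion with horizon M, and the distributed controller with virtual dynamics, for every time step k ∈ {0,…,M−1} the following summed one-step inequality holds: Σ_{i=1}^N ( x_{k+1,i}^T P̆_{k+1,i} x_{k+1,i} + u_{k,i}^T R_{k,i} u_{k,i} ) ≤ Σ_{i=1}^N x_{k,i}^T A_k^T P_{k+1,i} A_k x_{k,i} = Σ_{i=1}^N x_{k,i}^T ( P̆_{k,i} − N Q_k ) x_{k,i}. -/
open Matrix Finset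

section Helpers

lemma conjT_eq_transpose {a b : Type*} (M : Matrix a b ℝ) : Mᴴ = Mᵀ := by
  ext i j; simp [Matrix.conjTranspose_apply]

lemma sym_of_psd {d : ℕ} {M : Matrix (Fin d) (Fin d) ℝ} (h : M.PosSemidef) : Mᵀ = M := by
  rw [← conjT_eq_transpose]; exact h.isHermitian

lemma qform_nonneg {d : ℕ} {M : Matrix (Fin d) (Fin d) ℝ} (h : M.PosSemidef) (x : Fin d → ℝ) :
    0 ≤ x ⬝ᵥ (M *ᵥ x) := by simpa using h.dotProduct_mulVec_nonneg x

lemma bilin_comm {d : ℕ} {M : Matrix (Fin d) (Fin d) ℝ} (h : Mᵀ = M) (x y : Fin d → ℝ) :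
    x ⬝ᵥ (M *ᵥ y) = y ⬝ᵥ (M *ᵥ x) := by
  calc x ⬝ᵥ (M *ᵥ y) = (x ᵥ* M) ⬝ᵥ y := Matrix.dotProduct_mulVec x M y
    _ = (x ᵥ* Mᵀ) ⬝ᵥ y := by rw [h]
    _ = (M *ᵥ x) ⬝ᵥ y := by rw [Matrix.vecMul_transpose]
    _ = y ⬝ᵥ (M *ᵥ x) := dotProduct_comm _ _

lemma mulVec_dot {a b : ℕ} (M : Matrix (Fin a) (Fin b) ℝ) (x : Fin b → ℝ) (w : Fin a → ℝ) :
    (M *ᵥ x) ⬝ᵥ w = x ⬝ᵥ (Mᵀ *ᵥ w) := by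
  rw [Matrix.dotProduct_mulVec, Matrix.vecMul_transpose]

lemma conj_quad {a b : ℕ} (M : Matrix (Fin a) (Fin b) ℝ) (P : Matrix (Fin a) (Fin a) ℝ)
    (y : Fin b → ℝ) :
    (M *ᵥ y) ⬝ᵥ (P *ᵥ (M *ᵥ y)) = y ⬝ᵥ ((Mᵀ * P * M) *ᵥ y) := by
  rw [Matrix.mulVec_mulVec, mulVec_dot, Matrix.mulVec_mulVec, ← Matrix.mul_assoc]

lemma psd_smul {d : ℕ} {M : Matrix (Fin d) (Fin d) ℝ} (h : M.PosSemidef) {c : ℝ}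
    (hc : 0 ≤ c) : (c • M).PosSemidef := by
  refine Matrix.posSemidef_iff_dotProduct_mulVec.mpr ⟨?_, fun x => ?_⟩
  · unfold Matrix.IsHermitian
    rw [Matrix.conjTranspose_smul]
    simp [conjT_eq_transpose, sym_of_psd h]
  · have := h.dotProduct_mulVec_nonneg x
    simp only [Matrix.smul_mulVec, dotProduct_smul, smul_eq_mul, star_trivial] at *
    positivity

lemma pd_smul {d : ℕ} {M : Matrix (Fin d) (Fin d) ℝ} (h : M.PosDef) {c : ℝ}
    (hc : 0 < c) : (c • M).PosDef := by
  refine Matrix.posDef_iff_dotProduct_mulVec.mpr ⟨?_, fun x hx => ?_⟩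
  · unfold Matrix.IsHermitian
    rw [Matrix.conjTranspose_smul]
    simp [conjT_eq_transpose, sym_of_psd h.posSemidef]
  · have := h.dotProduct_mulVec_pos hx
    simp only [Matrix.smul_mulVec, dotProduct_smul, smul_eq_mul, star_trivial] at *
    positivity

lemma psd_sum {d : ℕ} {ι : Type*} (s : Finset ι) (f : ι → Matrix (Fin d) (Fin d) ℝ)
    (h : ∀ i ∈ s, (f i).PosSemidef) : (∑ i ∈ s, f i).PosSemidef :=
  Finset.sum_induction f _ (fun _ _ ha hb => ha.add hb) Matrix.PosSemidef.zero h

lemma psd_cs {d : ℕ} {M : Matrix (Fin d) (Fin d) ℝ} (h : M.PosSemidef) (x y : Fin d → ℝ) :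
    x ⬝ᵥ (M *ᵥ y) ≤ Real.sqrt (x ⬝ᵥ (M *ᵥ x)) * Real.sqrt (y ⬝ᵥ (M *ᵥ y)) := by
  have hsym := sym_of_psd h
  set a := y ⬝ᵥ (M *ᵥ y) with ha
  set b := x ⬝ᵥ (M *ᵥ y) with hb
  set c := x ⬝ᵥ (M *ᵥ x) with hc
  have key : ∀ t : ℝ, 0 ≤ a * (t * t) + (2 * b) * t + c := by
    intro t
    have h0 := qform_nonneg h (x + t • y)
    have expand : (x + t • y) ⬝ᵥ (M *ᵥ (x + t • y)) = a * (t * t) + (2 * b) * t + c := by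
      rw [Matrix.mulVec_add, Matrix.mulVec_smul]
      simp only [dotProduct_add, add_dotProduct, dotProduct_smul, smul_dotProduct,
        smul_eq_mul, smul_add]
      rw [bilin_comm hsym y x]
      ring
    linarith [expand ▸ h0]
  have hd : discrim a (2 * b) c ≤ 0 := discrim_le_zero key
  rw [discrim] at hd
  have hb2 : b ^ 2 ≤ a * c := by nlinarith
  calc b ≤ |b| := le_abs_self b
    _ = Real.sqrt (b ^ 2) := (Real.sqrt_sq_eq_abs b).symm
    _ ≤ Real.sqrt (a * c) := Real.sqrt_le_sqrt hb2
    _ = Real.sqrt a * Real.sqrt c := Real.sqrt_mul (qform_nonneg h y) c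
    _ = Real.sqrt c * Real.sqrt a := mul_comm _ _

lemma mulVec_finsum {a b : ℕ} {ι : Type*} (M : Matrix (Fin a) (Fin b) ℝ) (s : Finset ι)
    (f : ι → Fin b → ℝ) : M *ᵥ (∑ j ∈ s, f j) = ∑ j ∈ s, M *ᵥ f j := by
  induction s using Finset.cons_induction with
  | empty => simp
  | cons a s ha ih => simp [Finset.sum_cons, Matrix.mulVec_add, ih]

lemma dot_finsum {b : ℕ} {ι : Type*} (s : Finset ι) (f : ι → Fin b → ℝ) (w : Fin b → ℝ) :
    (∑ j ∈ s, f j) ⬝ᵥ w = ∑ j ∈ s, f j ⬝ᵥ w := by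
  induction s using Finset.cons_induction with
  | empty => simp
  | cons a s ha ih => simp [Finset.sum_cons, add_dotProduct, ih]

lemma finsum_dot {b : ℕ} {ι : Type*} (s : Finset ι) (f : ι → Fin b → ℝ) (w : Fin b → ℝ) :
    w ⬝ᵥ (∑ j ∈ s, f j) = ∑ j ∈ s, w ⬝ᵥ f j := by
  induction s using Finset.cons_induction with
  | empty => simp
  | cons a s ha ih => simp [Finset.sum_cons, dotProduct_add, ih]

lemma finsum_mulVec {a b : ℕ} {ι : Type*} (s : Finset ι) (f : ι → Matrix (Fin a) (Fin b) ℝ)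
    (v : Fin b → ℝ) : (∑ j ∈ s, f j) *ᵥ v = ∑ j ∈ s, f j *ᵥ v := by
  induction s using Finset.cons_induction with
  | empty => simp
  | cons a s ha ih => simp [Finset.sum_cons, Matrix.add_mulVec, ih]

lemma jensen {d : ℕ} {ι : Type*} {M : Matrix (Fin d) (Fin d) ℝ} (h : M.PosSemidef)
    (s : Finset ι) (w : ι → ℝ) (hw : ∀ j ∈ s, 0 ≤ w j) (hsum : ∑ j ∈ s, w j ≤ 1)
    (v : ι → Fin d → ℝ) :
    (∑ j ∈ s, w j • v j) ⬝ᵥ (M *ᵥ (∑ j ∈ s, w j • v j)) ≤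
      ∑ j ∈ s, w j * (v j ⬝ᵥ (M *ᵥ v j)) := by
  set q : ι → ℝ := fun j => v j ⬝ᵥ (M *ᵥ v j) with hq
  have hq0 : ∀ j, 0 ≤ q j := fun j => qform_nonneg h (v j)
  have expand : (∑ j ∈ s, w j • v j) ⬝ᵥ (M *ᵥ (∑ j ∈ s, w j • v j))
      = ∑ j ∈ s, ∑ l ∈ s, (w j * w l) * (v j ⬝ᵥ (M *ᵥ v l)) := by
    rw [mulVec_finsum, dot_finsum]
    refine Finset.sum_congr rfl fun j _ => ?_
    rw [finsum_dot]
    refine Finset.sum_congr rfl fun l _ => ?_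
    rw [Matrix.mulVec_smul, smul_dotProduct, dotProduct_smul]
    simp [smul_eq_mul]; ring
  rw [expand]
  have step1 : ∑ j ∈ s, ∑ l ∈ s, (w j * w l) * (v j ⬝ᵥ (M *ᵥ v l))
      ≤ ∑ j ∈ s, ∑ l ∈ s, (w j * Real.sqrt (q j)) * (w l * Real.sqrt (q l)) := by
    refine Finset.sum_le_sum fun j hj => Finset.sum_le_sum fun l hl => ?_
    have := psd_cs h (v j) (v l)
    calc (w j * w l) * (v j ⬝ᵥ (M *ᵥ v l))
        ≤ (w j * w l) * (Real.sqrt (q j) * Real.sqrt (q l)) := by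
          apply mul_le_mul_of_nonneg_left this (mul_nonneg (hw j hj) (hw l hl))
      _ = (w j * Real.sqrt (q j)) * (w l * Real.sqrt (q l)) := by ring
  have step2 : ∑ j ∈ s, ∑ l ∈ s, (w j * Real.sqrt (q j)) * (w l * Real.sqrt (q l))
      = (∑ j ∈ s, w j * Real.sqrt (q j)) ^ 2 := by
    rw [sq, Finset.sum_mul_sum]
  have step3 : (∑ j ∈ s, w j * Real.sqrt (q j)) ^ 2 ≤ (∑ j ∈ s, w j) * ∑ j ∈ s, w j * q j := by
    refine Finset.sum_sq_le_sum_mul_sum_of_sq_eq_mul s hw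
      (fun j hj => mul_nonneg (hw j hj) (hq0 j)) fun j hj => ?_
    rw [mul_pow, Real.sq_sqrt (hq0 j)]
    ring
  have step4 : (∑ j ∈ s, w j) * (∑ j ∈ s, w j * q j) ≤ ∑ j ∈ s, w j * q j := by
    have hnn : 0 ≤ ∑ j ∈ s, w j * q j :=
      Finset.sum_nonneg fun j hj => mul_nonneg (hw j hj) (hq0 j)
    nlinarith
  calc _ ≤ _ := step1
    _ = _ := step2
    _ ≤ _ := step3
    _ ≤ _ := step4

lemma completion_core {a b : ℕ} (P : Matrix (Fin a) (Fin a) ℝ)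
    (Rm S Si : Matrix (Fin b) (Fin b) ℝ) (B : Matrix (Fin a) (Fin b) ℝ)
    (hS : S = Rm + Bᵀ * P * B) (hSi : S * Si = 1) (hSi' : Si * S = 1)
    (hSit : Siᵀ = Si) (hPsym : Pᵀ = P) :
    (1 + B * (-(Si * (Bᵀ * P))))ᵀ * P * (1 + B * (-(Si * (Bᵀ * P))))
      + (-(Si * (Bᵀ * P)))ᵀ * Rm * (-(Si * (Bᵀ * P)))
      = P - P * B * Si * (Bᵀ * P) := by
  set K : Matrix (Fin b) (Fin a) ℝ := -(Si * (Bᵀ * P)) with hK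
  have hKt : Kᵀ = -(P * B * Si) := by
    rw [hK, Matrix.transpose_neg, Matrix.transpose_mul, Matrix.transpose_mul,
      Matrix.transpose_transpose, hSit, hPsym, Matrix.mul_assoc]
  have e1 : (1 + B * K)ᵀ = 1 + Kᵀ * Bᵀ := by
    rw [Matrix.transpose_add, Matrix.transpose_one, Matrix.transpose_mul]
  have hSK : S * K = -(Bᵀ * P) := by
    rw [hK, Matrix.mul_neg, ← Matrix.mul_assoc, hSi, Matrix.one_mul]
  have hterm4 : Kᵀ * (S * K) = P * B * Si * (Bᵀ * P) := by
    rw [hSK, hKt]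
    simp only [Matrix.neg_mul, Matrix.mul_neg, neg_neg, Matrix.mul_assoc]
  have hterm2 : P * (B * K) = -(P * B * Si * (Bᵀ * P)) := by
    rw [hK]
    simp only [Matrix.neg_mul, Matrix.mul_neg, neg_neg, Matrix.mul_assoc]
  have hterm3 : Kᵀ * Bᵀ * P = -(P * B * Si * (Bᵀ * P)) := by
    rw [hKt]
    simp only [Matrix.neg_mul, Matrix.mul_neg, neg_neg, Matrix.mul_assoc]
  have hcomb : Kᵀ * Bᵀ * P * (B * K) + Kᵀ * Rm * K = Kᵀ * (S * K) := by
    rw [hS, Matrix.add_mul, Matrix.mul_add, ← Matrix.mul_assoc Kᵀ Rm K]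
    simp only [Matrix.mul_assoc]
    abel
  have expand : (1 + Kᵀ * Bᵀ) * P * (1 + B * K) + Kᵀ * Rm * K
      = P + P * (B * K) + Kᵀ * Bᵀ * P + (Kᵀ * Bᵀ * P * (B * K) + Kᵀ * Rm * K) := by
    simp only [Matrix.add_mul, Matrix.mul_add, Matrix.one_mul, Matrix.mul_one]
    abel
  rw [e1, expand, hcomb, hterm2, hterm3, hterm4]
  abel

lemma woodbury {a b : ℕ} (P : Matrix (Fin a) (Fin a) ℝ)
    (Rm S Si : Matrix (Fin b) (Fin b) ℝ) (B : Matrix (Fin a) (Fin b) ℝ)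
    (hS : S = Rm + Bᵀ * P * B) (hSi : S * Si = 1) (hSi' : Si * S = 1)
    (hPinv : P⁻¹ * P = 1) (hRinv : Rm⁻¹ * Rm = 1) :
    (P⁻¹ + B * Rm⁻¹ * Bᵀ)⁻¹ = P - P * B * Si * (Bᵀ * P) := by
  apply Matrix.inv_eq_right_inv
  have hBPB : Bᵀ * P * B = S - Rm := by rw [hS]; abel
  rw [Matrix.mul_sub, Matrix.add_mul, Matrix.add_mul]
  have e1 : P⁻¹ * P = 1 := hPinv
  have e2 : P⁻¹ * (P * B * Si * (Bᵀ * P)) = B * Si * (Bᵀ * P) := by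
    rw [show P * B * Si * (Bᵀ * P) = P * (B * Si * (Bᵀ * P)) by
      simp only [Matrix.mul_assoc], ← Matrix.mul_assoc, hPinv, Matrix.one_mul]
  have e3 : B * Rm⁻¹ * Bᵀ * (P * B * Si * (Bᵀ * P))
      = B * Rm⁻¹ * Bᵀ * P - B * Si * (Bᵀ * P) := by
    have : B * Rm⁻¹ * Bᵀ * (P * B * Si * (Bᵀ * P))
        = B * Rm⁻¹ * ((Bᵀ * P * B) * (Si * (Bᵀ * P))) := by
      simp only [Matrix.mul_assoc]
    rw [this, hBPB, Matrix.sub_mul, Matrix.mul_sub]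
    rw [show S * (Si * (Bᵀ * P)) = (S * Si) * (Bᵀ * P) by simp only [Matrix.mul_assoc],
      hSi, Matrix.one_mul]
    congr 1
    · simp only [Matrix.mul_assoc]
    · rw [show B * Rm⁻¹ * (Rm * (Si * (Bᵀ * P))) = B * ((Rm⁻¹ * Rm) * (Si * (Bᵀ * P))) by
        simp only [Matrix.mul_assoc], hRinv, Matrix.one_mul, Matrix.mul_assoc]
  rw [e1, e2, e3]
  abel

end Helpers

/-- Aggregated one-step descent inequality from the proof of Theorem 2 of the paper:
summing the per-agent inequality over all agents,
`Σ_i (x_{k+1,i}ᵀ P̆_{k+1,i} x_{k+1,i} + u_{k,i}ᵀ R_{k,i} u_{k,i})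
  ≤ Σ_i x_{k,i}ᵀ A_kᵀ P_{k+1,i} A_k x_{k,i} = Σ_i x_{k,i}ᵀ (P̆_{k,i} − N Q_k) x_{k,i}`. -/
theorem aggregated_one_step_inequality {n N : ℕ} (hN : 0 < N) (m : Fin N → ℕ)
    (nbr : Fin N → Finset (Fin N)) (hself : ∀ i, i ∈ nbr i)
    (ω : Fin N → Fin N → ℝ)
    (hω : ∀ i, ∀ j ∈ nbr i, 0 < ω i j ∧
      ω i j ≤ 1 / ((Finset.univ.filter (fun l => j ∈ nbr l)).card : ℝ))
    (M : ℕ)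
    (A : ℕ → Matrix (Fin n) (Fin n) ℝ)
    (B : ∀ _ : ℕ, ∀ i : Fin N, Matrix (Fin n) (Fin (m i)) ℝ)
    (Q : ℕ → Matrix (Fin n) (Fin n) ℝ) (hQ : ∀ k, (Q k).PosDef)
    (R : ∀ _ : ℕ, ∀ i : Fin N, Matrix (Fin (m i)) (Fin (m i)) ℝ)
    (hR : ∀ k i, (R k i).PosDef)
    (Pbar Pm Pbrv : ℕ → Fin N → Matrix (Fin n) (Fin n) ℝ)
    (hPbrvM : ∀ i, Pbrv M i = (N : ℝ) • Q M)
    (hPbar : ∀ k < M, ∀ i,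
      Pbar (k+1) i = ((Pbrv (k+1) i)⁻¹ + B k i * (R k i)⁻¹ * (B k i)ᵀ)⁻¹)
    (hPm : ∀ k < M, ∀ i, Pm (k+1) i = (∑ j ∈ nbr i, ω i j • (Pbar (k+1) j)⁻¹)⁻¹)
    (hPbrv : ∀ k < M, ∀ i, Pbrv k i = (A k)ᵀ * Pm (k+1) i * A k + (N : ℝ) • Q k)
    (xv : ℕ → Fin N → Fin n → ℝ)
    (u : ∀ _ : ℕ, ∀ i : Fin N, Fin (m i) → ℝ)
    (hxv : ∀ k < M, ∀ i, xv (k+1) i =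
      (∑ j ∈ Finset.univ.filter (fun j => i ∈ nbr j),
        ω j i • ((Pbar (k+1) i)⁻¹ *ᵥ (Pm (k+1) j *ᵥ (A k *ᵥ xv k j))))
      + B k i *ᵥ u k i)
    (hu : ∀ k < M, ∀ i, u k i =
      (-((R k i + (B k i)ᵀ * Pbrv (k+1) i * B k i)⁻¹ * ((B k i)ᵀ * Pbrv (k+1) i))) *ᵥ
      (∑ j ∈ Finset.univ.filter (fun j => i ∈ nbr j),
        ω j i • ((Pbar (k+1) i)⁻¹ *ᵥ (Pm (k+1) j *ᵥ (A k *ᵥ xv k j)))))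
    :
    ∀ k < M,
      (∑ i, (xv (k+1) i ⬝ᵥ (Pbrv (k+1) i *ᵥ xv (k+1) i) + u k i ⬝ᵥ (R k i *ᵥ u k i)))
        ≤ ∑ i, xv k i ⬝ᵥ (((A k)ᵀ * Pm (k+1) i * A k) *ᵥ xv k i) ∧
      (∑ i, xv k i ⬝ᵥ (((A k)ᵀ * Pm (k+1) i * A k) *ᵥ xv k i))
        = ∑ i, xv k i ⬝ᵥ ((Pbrv k i - (N : ℝ) • Q k) *ᵥ xv k i) := by
  have hQN : ∀ k, ((N : ℝ) • Q k).PosDef := fun k =>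
    pd_smul (hQ k) (by positivity)
  -- Positive definiteness of Pbrv for all times up to M, by backward induction
  have hPDaux : ∀ d, d ≤ M → ∀ i, (Pbrv (M - d) i).PosDef := by
    intro d
    induction d with
    | zero => intro _ i; rw [Nat.sub_zero, hPbrvM i]; exact hQN M
    | succ d ih =>
      intro hd i
      have hdM : d ≤ M := Nat.le_of_succ_le hd
      have hk : M - (d+1) < M := by omega
      have hk1 : M - (d+1) + 1 = M - d := by omega
      have hbarPD : ∀ j, (Pbar (M - d) j).PosDef := by
        intro j
        have h1 : (Pbrv (M - d) j).PosDef := ih hdM j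
        have hpsd : (B (M-(d+1)) j * (R (M-(d+1)) j)⁻¹ * (B (M-(d+1)) j)ᵀ).PosSemidef := by
          have := ((hR (M-(d+1)) j).inv.posSemidef).mul_mul_conjTranspose_same
            (B (M-(d+1)) j)
          rwa [conjT_eq_transpose] at this
        have h2 := h1.inv.add_posSemidef hpsd
        have h3 := hPbar _ hk j
        rw [hk1] at h3
        rw [h3]
        exact h2.inv
      have hsumPD : (∑ j ∈ nbr i, ω i j • (Pbar (M - d) j)⁻¹).PosDef := by
        rw [← Finset.add_sum_erase (nbr i) _ (hself i)]
        refine (pd_smul (hbarPD i).inv (hω i i (hself i)).1).add_posSemidef ?_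
        refine psd_sum _ _ fun j hj => ?_
        exact psd_smul (hbarPD j).inv.posSemidef
          (hω i j (Finset.mem_of_mem_erase hj)).1.le
      have hPmPD : (Pm (M - d) i).PosDef := by
        have h3 := hPm _ hk i
        rw [hk1] at h3
        rw [h3]
        exact hsumPD.inv
      have h4 := hPbrv _ hk i
      rw [hk1] at h4
      rw [h4]
      have hpsd : ((A (M-(d+1)))ᵀ * Pm (M - d) i * A (M-(d+1))).PosSemidef := by
        have := hPmPD.posSemidef.conjTranspose_mul_mul_same (A (M-(d+1)))
        rwa [conjT_eq_transpose] at this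
      exact (hQN _).posSemidef_add hpsd
  have hPDbrv : ∀ k ≤ M, ∀ i, (Pbrv k i).PosDef := by
    intro k hkM i
    have := hPDaux (M - k) (by omega) i
    rwa [show M - (M - k) = k by omega] at this
  intro k hk
  constructor
  · -- the inequality
    -- positive definiteness data at time k
    have hbrv1PD : ∀ i, (Pbrv (k+1) i).PosDef := fun i => hPDbrv (k+1) (by omega) i
    have hXbPD : ∀ i, ((Pbrv (k+1) i)⁻¹ + B k i * (R k i)⁻¹ * (B k i)ᵀ).PosDef := by
      intro i
      refine (hbrv1PD i).inv.add_posSemidef ?_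
      have := ((hR k i).inv.posSemidef).mul_mul_conjTranspose_same (B k i)
      rwa [conjT_eq_transpose] at this
    have hbarPD : ∀ i, (Pbar (k+1) i).PosDef := by
      intro i; rw [hPbar k hk i]; exact (hXbPD i).inv
    have hbarInv : ∀ i, (Pbar (k+1) i)⁻¹
        = (Pbrv (k+1) i)⁻¹ + B k i * (R k i)⁻¹ * (B k i)ᵀ := by
      intro i; rw [hPbar k hk i]
      exact Matrix.nonsing_inv_nonsing_inv _
        ((Matrix.isUnit_iff_isUnit_det _).mp (hXbPD i).isUnit)
    have hYmPD : ∀ i, (∑ j ∈ nbr i, ω i j • (Pbar (k+1) j)⁻¹).PosDef := by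
      intro i
      rw [← Finset.add_sum_erase (nbr i) _ (hself i)]
      refine (pd_smul (hbarPD i).inv (hω i i (hself i)).1).add_posSemidef ?_
      refine psd_sum _ _ fun j hj => ?_
      exact psd_smul (hbarPD j).inv.posSemidef
        (hω i j (Finset.mem_of_mem_erase hj)).1.le
    have hPmPD : ∀ i, (Pm (k+1) i).PosDef := by
      intro i; rw [hPm k hk i]; exact (hYmPD i).inv
    have hPmInv : ∀ i, (Pm (k+1) i)⁻¹ = ∑ j ∈ nbr i, ω i j • (Pbar (k+1) j)⁻¹ := by
      intro i; rw [hPm k hk i]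
      exact Matrix.nonsing_inv_nonsing_inv _
        ((Matrix.isUnit_iff_isUnit_det _).mp (hYmPD i).isUnit)
    -- abbreviations
    set w : Fin N → Fin n → ℝ := fun j => Pm (k+1) j *ᵥ (A k *ᵥ xv k j) with hwdef
    set z : Fin N → Fin n → ℝ :=
      fun i => ∑ j ∈ Finset.univ.filter (fun j => i ∈ nbr j), ω j i • w j with hzdef
    have hyagg : ∀ i, (∑ j ∈ Finset.univ.filter (fun j => i ∈ nbr j),
        ω j i • ((Pbar (k+1) i)⁻¹ *ᵥ (Pm (k+1) j *ᵥ (A k *ᵥ xv k j))))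
        = (Pbar (k+1) i)⁻¹ *ᵥ z i := by
      intro i
      rw [hzdef]
      rw [mulVec_finsum]
      refine Finset.sum_congr rfl fun j _ => ?_
      rw [Matrix.mulVec_smul]
    -- per-agent identity
    have hagent : ∀ i, xv (k+1) i ⬝ᵥ (Pbrv (k+1) i *ᵥ xv (k+1) i)
        + u k i ⬝ᵥ (R k i *ᵥ u k i)
        = z i ⬝ᵥ ((Pbar (k+1) i)⁻¹ *ᵥ z i) := by
      intro i
      have hPsym : (Pbrv (k+1) i)ᵀ = Pbrv (k+1) i := sym_of_psd (hbrv1PD i).posSemidef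
      have hSpd : (R k i + (B k i)ᵀ * Pbrv (k+1) i * B k i).PosDef := by
        refine (hR k i).add_posSemidef ?_
        have := (hbrv1PD i).posSemidef.conjTranspose_mul_mul_same (B k i)
        rwa [conjT_eq_transpose] at this
      have hSdet : IsUnit (R k i + (B k i)ᵀ * Pbrv (k+1) i * B k i).det :=
        (Matrix.isUnit_iff_isUnit_det _).mp hSpd.isUnit
      have hSinv : (R k i + (B k i)ᵀ * Pbrv (k+1) i * B k i)
          * (R k i + (B k i)ᵀ * Pbrv (k+1) i * B k i)⁻¹ = 1 :=
        Matrix.mul_nonsing_inv _ hSdet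
      have hSinv' : (R k i + (B k i)ᵀ * Pbrv (k+1) i * B k i)⁻¹
          * (R k i + (B k i)ᵀ * Pbrv (k+1) i * B k i) = 1 :=
        Matrix.nonsing_inv_mul _ hSdet
      have hSit : ((R k i + (B k i)ᵀ * Pbrv (k+1) i * B k i)⁻¹)ᵀ
          = (R k i + (B k i)ᵀ * Pbrv (k+1) i * B k i)⁻¹ := by
        rw [Matrix.transpose_nonsing_inv, sym_of_psd hSpd.posSemidef]
      set K := -((R k i + (B k i)ᵀ * Pbrv (k+1) i * B k i)⁻¹
        * ((B k i)ᵀ * Pbrv (k+1) i)) with hKdef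
      have hu' : u k i = K *ᵥ ((Pbar (k+1) i)⁻¹ *ᵥ z i) := by
        rw [hu k hk i, hyagg i]
      have hx' : xv (k+1) i = (1 + B k i * K) *ᵥ ((Pbar (k+1) i)⁻¹ *ᵥ z i) := by
        rw [hxv k hk i, hyagg i, hu', Matrix.add_mulVec, Matrix.one_mulVec,
          ← Matrix.mulVec_mulVec]
      have hbarEq : Pbar (k+1) i = Pbrv (k+1) i - Pbrv (k+1) i * B k i
          * (R k i + (B k i)ᵀ * Pbrv (k+1) i * B k i)⁻¹ * ((B k i)ᵀ * Pbrv (k+1) i) := by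
        rw [hPbar k hk i]
        exact woodbury (Pbrv (k+1) i) (R k i) _ _ (B k i) rfl hSinv hSinv'
          (Matrix.nonsing_inv_mul _ ((Matrix.isUnit_iff_isUnit_det _).mp (hbrv1PD i).isUnit))
          (Matrix.nonsing_inv_mul _ ((Matrix.isUnit_iff_isUnit_det _).mp (hR k i).isUnit))
      have hcomp := completion_core (Pbrv (k+1) i) (R k i)
        (R k i + (B k i)ᵀ * Pbrv (k+1) i * B k i)
        (R k i + (B k i)ᵀ * Pbrv (k+1) i * B k i)⁻¹ (B k i) rfl hSinv hSinv' hSit hPsym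
      calc xv (k+1) i ⬝ᵥ (Pbrv (k+1) i *ᵥ xv (k+1) i) + u k i ⬝ᵥ (R k i *ᵥ u k i)
          = ((Pbar (k+1) i)⁻¹ *ᵥ z i) ⬝ᵥ
              (((1 + B k i * K)ᵀ * Pbrv (k+1) i * (1 + B k i * K)) *ᵥ ((Pbar (k+1) i)⁻¹ *ᵥ z i))
            + ((Pbar (k+1) i)⁻¹ *ᵥ z i) ⬝ᵥ
              ((Kᵀ * R k i * K) *ᵥ ((Pbar (k+1) i)⁻¹ *ᵥ z i)) := by
            rw [hx', hu', conj_quad (1 + B k i * K) (Pbrv (k+1) i),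
              conj_quad K (R k i)]
        _ = ((Pbar (k+1) i)⁻¹ *ᵥ z i) ⬝ᵥ
              ((((1 + B k i * K)ᵀ * Pbrv (k+1) i * (1 + B k i * K)) + (Kᵀ * R k i * K))
                *ᵥ ((Pbar (k+1) i)⁻¹ *ᵥ z i)) := by
            rw [Matrix.add_mulVec, dotProduct_add]
        _ = ((Pbar (k+1) i)⁻¹ *ᵥ z i) ⬝ᵥ (Pbar (k+1) i *ᵥ ((Pbar (k+1) i)⁻¹ *ᵥ z i)) := by
            rw [hKdef, hcomp, ← hbarEq]
        _ = z i ⬝ᵥ ((Pbar (k+1) i)⁻¹ *ᵥ z i) := by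
            rw [Matrix.mulVec_mulVec, Matrix.mul_nonsing_inv _
              ((Matrix.isUnit_iff_isUnit_det _).mp (hbarPD i).isUnit), Matrix.one_mulVec,
              dotProduct_comm]
    -- Jensen step
    have hjen : ∀ i, z i ⬝ᵥ ((Pbar (k+1) i)⁻¹ *ᵥ z i)
        ≤ ∑ j ∈ Finset.univ.filter (fun j => i ∈ nbr j),
            ω j i * (w j ⬝ᵥ ((Pbar (k+1) i)⁻¹ *ᵥ w j)) := by
      intro i
      refine jensen (hbarPD i).inv.posSemidef _ _ ?_ ?_ _
      · intro j hj
        exact (hω j i (Finset.mem_filter.mp hj).2).1.le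
      · have hc : 0 < (Finset.univ.filter (fun l => i ∈ nbr l)).card :=
          Finset.card_pos.mpr ⟨i, by simp [hself i]⟩
        calc ∑ j ∈ Finset.univ.filter (fun j => i ∈ nbr j), ω j i
            ≤ ∑ j ∈ Finset.univ.filter (fun j => i ∈ nbr j),
                (1 / ((Finset.univ.filter (fun l => i ∈ nbr l)).card : ℝ)) :=
              Finset.sum_le_sum fun j hj => (hω j i (Finset.mem_filter.mp hj).2).2
          _ = ((Finset.univ.filter (fun l => i ∈ nbr l)).card : ℝ)
              * (1 / ((Finset.univ.filter (fun l => i ∈ nbr l)).card : ℝ)) := by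
              rw [Finset.sum_const, nsmul_eq_mul]
          _ = 1 := by
              field_simp
    -- swap the double sum and collapse
    have hswap : ∑ i, ∑ j ∈ Finset.univ.filter (fun j => i ∈ nbr j),
        ω j i * (w j ⬝ᵥ ((Pbar (k+1) i)⁻¹ *ᵥ w j))
        = ∑ j, ∑ i ∈ nbr j, ω j i * (w j ⬝ᵥ ((Pbar (k+1) i)⁻¹ *ᵥ w j)) := by
      calc ∑ i, ∑ j ∈ Finset.univ.filter (fun j => i ∈ nbr j),
          ω j i * (w j ⬝ᵥ ((Pbar (k+1) i)⁻¹ *ᵥ w j))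
          = ∑ i, ∑ j, if i ∈ nbr j then ω j i * (w j ⬝ᵥ ((Pbar (k+1) i)⁻¹ *ᵥ w j)) else 0 := by
            exact Finset.sum_congr rfl fun i _ => Finset.sum_filter _ _
        _ = ∑ j, ∑ i, if i ∈ nbr j then ω j i * (w j ⬝ᵥ ((Pbar (k+1) i)⁻¹ *ᵥ w j)) else 0 :=
            Finset.sum_comm
        _ = ∑ j, ∑ i ∈ nbr j, ω j i * (w j ⬝ᵥ ((Pbar (k+1) i)⁻¹ *ᵥ w j)) := by
            refine Finset.sum_congr rfl fun j _ => ?_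
            rw [← Finset.sum_filter, Finset.filter_univ_mem]
    have hcollapse : ∀ j, ∑ i ∈ nbr j, ω j i * (w j ⬝ᵥ ((Pbar (k+1) i)⁻¹ *ᵥ w j))
        = xv k j ⬝ᵥ (((A k)ᵀ * Pm (k+1) j * A k) *ᵥ xv k j) := by
      intro j
      have h1 : ∑ i ∈ nbr j, ω j i * (w j ⬝ᵥ ((Pbar (k+1) i)⁻¹ *ᵥ w j))
          = w j ⬝ᵥ ((∑ i ∈ nbr j, ω j i • (Pbar (k+1) i)⁻¹) *ᵥ w j) := by
        rw [finsum_mulVec, finsum_dot]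
        refine Finset.sum_congr rfl fun i _ => ?_
        rw [Matrix.smul_mulVec, dotProduct_smul, smul_eq_mul]
      rw [h1, ← hPmInv j]
      have h3 : (Pm (k+1) j)⁻¹ *ᵥ w j = A k *ᵥ xv k j := by
        rw [hwdef]
        show (Pm (k+1) j)⁻¹ *ᵥ (Pm (k+1) j *ᵥ (A k *ᵥ xv k j)) = A k *ᵥ xv k j
        rw [Matrix.mulVec_mulVec, Matrix.nonsing_inv_mul _
          ((Matrix.isUnit_iff_isUnit_det _).mp (hPmPD j).isUnit), Matrix.one_mulVec]
      rw [h3]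
      show (Pm (k+1) j *ᵥ (A k *ᵥ xv k j)) ⬝ᵥ (A k *ᵥ xv k j) = _
      rw [dotProduct_comm, ← conj_quad]
    calc ∑ i, (xv (k+1) i ⬝ᵥ (Pbrv (k+1) i *ᵥ xv (k+1) i) + u k i ⬝ᵥ (R k i *ᵥ u k i))
        = ∑ i, z i ⬝ᵥ ((Pbar (k+1) i)⁻¹ *ᵥ z i) :=
          Finset.sum_congr rfl fun i _ => hagent i
      _ ≤ ∑ i, ∑ j ∈ Finset.univ.filter (fun j => i ∈ nbr j),
            ω j i * (w j ⬝ᵥ ((Pbar (k+1) i)⁻¹ *ᵥ w j)) :=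
          Finset.sum_le_sum fun i _ => hjen i
      _ = ∑ j, ∑ i ∈ nbr j, ω j i * (w j ⬝ᵥ ((Pbar (k+1) i)⁻¹ *ᵥ w j)) := hswap
      _ = ∑ j, xv k j ⬝ᵥ (((A k)ᵀ * Pm (k+1) j * A k) *ᵥ xv k j) :=
          Finset.sum_congr rfl fun j _ => hcollapse j
  · -- the equality
    refine Finset.sum_congr rfl fun i _ => ?_
    rw [hPbrv k hk i, add_sub_cancel_right]
end

section
/- In the time-invariant setting (A_k = A invertible, B_{k,i} = B_i, Q_k = Q ≻ 0, R_{k,i} = R_i ≻ 0), define for each agent i the sequence S_i(0) = N Q and S_i(t+1) = A^T ( Σ_{j∈𝒩_i} ω_ij ( S_j(t)^{-1} + B_j R_j^{-1} B_j^T ) )^{-1} A + N Q. Then for all t ≥ 0 and every i, S_i(t+1) − S_i(t) is symmetric positive definite; i.e., the sequence (S_i(t))_{t≥0} is strictly increasing in the Loewner order. Equivalently, for the backward recursion on any horizon M, P̆_{k−1,i} > P̆_{k,i} for all k ∈ {1,…,M} and all i. -/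
open Matrix Finset

section Aux
variable {n : ℕ}

private lemma real_herm_transpose {X : Matrix (Fin n) (Fin n) ℝ} (h : X.IsHermitian) :
    Xᵀ = X := by
  rw [← conjTranspose_eq_transpose_of_trivial]; exact h

private lemma posDef_smul {c : ℝ} (hc : 0 < c) {M : Matrix (Fin n) (Fin n) ℝ}
    (hM : M.PosDef) : (c • M).PosDef := by
  rw [posDef_iff_dotProduct_mulVec]
  refine ⟨?_, fun x hx => ?_⟩
  · unfold Matrix.IsHermitian
    rw [conjTranspose_smul, hM.1]
    simp
  · have := hM.dotProduct_mulVec_pos hx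
    simp only [smul_mulVec, dotProduct_smul, smul_eq_mul]
    positivity

private lemma posDef_conj {U X : Matrix (Fin n) (Fin n) ℝ} (hX : X.PosDef)
    (hU : IsUnit U.det) : (Uᵀ * X * U).PosDef := by
  rw [posDef_iff_dotProduct_mulVec]
  refine ⟨?_, fun x hx => ?_⟩
  · have := isHermitian_conjTranspose_mul_mul U hX.1
    rwa [conjTranspose_eq_transpose_of_trivial] at this
  · have hUx : U *ᵥ x ≠ 0 := by
      have hinj : Function.Injective (U.mulVec) :=
        mulVec_injective_iff_isUnit.mpr ((isUnit_iff_isUnit_det U).mpr hU)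
      intro h
      exact hx (hinj (by simpa using h))
    have h2 := hX.dotProduct_mulVec_pos hUx
    have e : x ⬝ᵥ (Uᵀ * X * U) *ᵥ x = (U *ᵥ x) ⬝ᵥ X *ᵥ (U *ᵥ x) := by
      rw [Matrix.mul_assoc, ← Matrix.mulVec_mulVec, Matrix.dotProduct_mulVec,
        Matrix.vecMul_transpose, Matrix.mulVec_mulVec]
    simpa [e] using h2

private lemma posSemidef_sum {ι : Type*} (s : Finset ι)
    (f : ι → Matrix (Fin n) (Fin n) ℝ) (h : ∀ j ∈ s, (f j).PosSemidef) :
    (∑ j ∈ s, f j).PosSemidef := by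
  classical
  induction s using Finset.induction with
  | empty => simpa using (Matrix.PosSemidef.zero : (0 : Matrix (Fin n) (Fin n) ℝ).PosSemidef)
  | @insert a s hj ih =>
    rw [Finset.sum_insert hj]
    exact ((h _ (Finset.mem_insert_self _ _)).add
      (ih fun j hjs => h j (Finset.mem_insert_of_mem hjs)))

private lemma posDef_sum {ι : Type*} [DecidableEq ι] (s : Finset ι) {i : ι} (hi : i ∈ s)
    (f : ι → Matrix (Fin n) (Fin n) ℝ) (h : ∀ j ∈ s, (f j).PosDef) :
    (∑ j ∈ s, f j).PosDef := by
  rw [← Finset.add_sum_erase s f hi]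
  exact (h i hi).add_posSemidef
    (posSemidef_sum _ _ fun j hj => (h j (Finset.mem_of_mem_erase hj)).posSemidef)

private lemma inv_sub_inv_posDef {P D : Matrix (Fin n) (Fin n) ℝ}
    (hP : P.PosDef) (hD : D.PosDef) : (P⁻¹ - (P + D)⁻¹).PosDef := by
  set B := P + D with hBdef
  have hB : B.PosDef := hP.add hD
  have hPd : IsUnit P.det := hP.det_pos.ne'.isUnit
  have hBd : IsUnit B.det := hB.det_pos.ne'.isUnit
  have hDB : D = B - P := by rw [hBdef]; abel
  have h1 : B⁻¹ * D * P⁻¹ = P⁻¹ - B⁻¹ := by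
    rw [hDB]
    simp [Matrix.mul_sub, Matrix.sub_mul, Matrix.mul_assoc,
      Matrix.nonsing_inv_mul _ hBd, Matrix.mul_nonsing_inv _ hPd,
      Matrix.nonsing_inv_mul_cancel_left _ _ hBd]
  have h2 : P⁻¹ * D * B⁻¹ = P⁻¹ - B⁻¹ := by
    rw [hDB]
    simp [Matrix.mul_sub, Matrix.sub_mul, Matrix.mul_assoc,
      Matrix.nonsing_inv_mul _ hPd, Matrix.mul_nonsing_inv _ hBd,
      Matrix.nonsing_inv_mul_cancel_left _ _ hPd]
  have key : P⁻¹ - B⁻¹ = B⁻¹ * D * B⁻¹ + B⁻¹ * D * P⁻¹ * D * B⁻¹ := by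
    calc P⁻¹ - B⁻¹ = P⁻¹ * D * B⁻¹ := h2.symm
      _ = B⁻¹ * D * B⁻¹ + (P⁻¹ - B⁻¹) * D * B⁻¹ := by
          rw [Matrix.sub_mul, Matrix.sub_mul]; abel
      _ = B⁻¹ * D * B⁻¹ + B⁻¹ * D * P⁻¹ * D * B⁻¹ := by rw [← h1]
  rw [key]
  have hBinvT : (B⁻¹)ᵀ = B⁻¹ := real_herm_transpose hB.inv.1
  have term1 : (B⁻¹ * D * B⁻¹).PosDef := by
    have := posDef_conj hD (hB.inv.det_pos.ne'.isUnit)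
    rwa [hBinvT] at this
  have term2 : (B⁻¹ * D * P⁻¹ * D * B⁻¹).PosDef := by
    have hUdet : IsUnit ((D * B⁻¹).det) := by
      rw [det_mul]
      exact (mul_pos hD.det_pos hB.inv.det_pos).ne'.isUnit
    have := posDef_conj hP.inv hUdet
    have hT : (D * B⁻¹)ᵀ = B⁻¹ * D := by
      rw [transpose_mul, hBinvT, real_herm_transpose hD.1]
    rw [hT] at this
    simpa [Matrix.mul_assoc] using this
  exact term1.add term2

end Aux

/-- Monotonicity step in the proof of Theorem 3 of the paper: in the time-invariant
setting, the per-agent sequence `S_i(0) = N Q`,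
`S_i(t+1) = Aᵀ (Σ_{j∈𝒩_i} ω_{ij} (S_j(t)⁻¹ + B_j R_j⁻¹ B_jᵀ))⁻¹ A + N Q`
is strictly increasing in the Loewner order: `S_i(t+1) − S_i(t)` is positive definite
for every `t` and every agent `i`. -/
theorem time_invariant_recursion_monotone {n N : ℕ} (hN : 0 < N) (m : Fin N → ℕ)
    (nbr : Fin N → Finset (Fin N)) (hself : ∀ i, i ∈ nbr i)
    (ω : Fin N → Fin N → ℝ)
    (hω : ∀ i, ∀ j ∈ nbr i, 0 < ω i j ∧
      ω i j ≤ 1 / ((Finset.univ.filter (fun l => j ∈ nbr l)).card : ℝ))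
    (A : Matrix (Fin n) (Fin n) ℝ) (hA : IsUnit A.det)
    (B : ∀ i : Fin N, Matrix (Fin n) (Fin (m i)) ℝ)
    (Q : Matrix (Fin n) (Fin n) ℝ) (hQ : Q.PosDef)
    (R : ∀ i : Fin N, Matrix (Fin (m i)) (Fin (m i)) ℝ) (hR : ∀ i, (R i).PosDef)
    (S : ℕ → Fin N → Matrix (Fin n) (Fin n) ℝ)
    (hS0 : ∀ i, S 0 i = (N : ℝ) • Q)
    (hSsucc : ∀ t i, S (t+1) i =
      Aᵀ * (∑ j ∈ nbr i, ω i j • ((S t j)⁻¹ + B j * (R j)⁻¹ * (B j)ᵀ))⁻¹ * A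
        + (N : ℝ) • Q) :
    ∀ t i, (S (t+1) i - S t i).PosDef := by
  have hNQ : ((N : ℝ) • Q).PosDef :=
    posDef_smul (by exact_mod_cast hN) hQ
  set M : ℕ → Fin N → Matrix (Fin n) (Fin n) ℝ :=
    fun t i => ∑ j ∈ nbr i, ω i j • ((S t j)⁻¹ + B j * (R j)⁻¹ * (B j)ᵀ) with hM
  -- each BRBᵀ is possemidef
  have hBRB : ∀ j, (B j * (R j)⁻¹ * (B j)ᵀ).PosSemidef := by
    intro j
    have := (hR j).inv.posSemidef.mul_mul_conjTranspose_same (B j)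
    rwa [conjTranspose_eq_transpose_of_trivial] at this
  -- M is posdef whenever all S t j are
  have hMpos : ∀ t, (∀ j, (S t j).PosDef) → ∀ i, (M t i).PosDef := by
    intro t hS i
    refine posDef_sum (nbr i) (hself i) _ fun j hj => ?_
    exact posDef_smul (hω i j hj).1 ((hS j).inv.add_posSemidef (hBRB j))
  -- all S t j are posdef
  have hSpos : ∀ t j, (S t j).PosDef := by
    intro t
    induction t with
    | zero => intro j; rw [hS0]; exact hNQ
    | succ t ih =>
      intro j
      rw [hSsucc]
      exact (posDef_conj (hMpos t ih j).inv hA).add hNQ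
  -- the monotonicity statement
  intro t
  induction t with
  | zero =>
    intro i
    have h1 : S 1 i - S 0 i = Aᵀ * (M 0 i)⁻¹ * A := by
      rw [hSsucc, hS0]; abel
    rw [h1]
    exact posDef_conj (hMpos 0 (hSpos 0) i).inv hA
  | succ t ih =>
    -- first: M t i - M (t+1) i is posdef
    have hMdiff : ∀ i, (M t i - M (t+1) i).PosDef := by
      intro i
      have hsum : M t i - M (t+1) i
          = ∑ j ∈ nbr i, ω i j • ((S t j)⁻¹ - (S (t+1) j)⁻¹) := by
        rw [hM]
        rw [← Finset.sum_sub_distrib]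
        refine Finset.sum_congr rfl fun j hj => ?_
        rw [← smul_sub]
        congr 1
        abel
      rw [hsum]
      refine posDef_sum (nbr i) (hself i) _ fun j hj => ?_
      refine posDef_smul (hω i j hj).1 ?_
      have hSsum : S (t+1) j = S t j + (S (t+1) j - S t j) := by abel
      rw [hSsum]
      exact inv_sub_inv_posDef (hSpos t j) (ih j)
    intro i
    have hdiff : S (t+2) i - S (t+1) i
        = Aᵀ * ((M (t+1) i)⁻¹ - (M t i)⁻¹) * A := by
      rw [hSsucc (t+1) i, hSsucc t i, Matrix.mul_sub, Matrix.sub_mul]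
      abel
    rw [hdiff]
    refine posDef_conj ?_ hA
    have hMsum : M t i = M (t+1) i + (M t i - M (t+1) i) := by abel
    rw [hMsum]
    exact inv_sub_inv_posDef (hMpos (t+1) (hSpos (t+1)) i) (hMdiff i)
end
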